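/- arXiv:1708.08967 — 3 statements merged into one kernel-verified Lean document; each statement's English description precedes it below -/
import Mathlib

section
/- If T is a tree on n ≥ 4 vertices, then SEI_a(T) ≤ (n−1)a^{n−1} + (n−1)a for every real a > 1, with equality if and only if T is isomorphic to the star S_n (the tree with one vertex of degree n−1 and n−1 vertices of degree 1). -/
open Finset Real

/-- The degree of a vertex `v` in a graph `G` (number of neighbours). -/
noncomputable def deg {n : ℕ} (G : SimpleGraph (Fin n)) (v : Fin n) : ℕ :=
  Nat.card (G.neighborSet v)

/-- The zeroth-order general Randć index `R⁰_α(G) = Σ_v (d_v)^α`. -/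
noncomputable def R0 {n : ℕ} (G : SimpleGraph (Fin n)) (α : ℝ) : ℝ :=
  ∑ v : Fin n, (deg G v : ℝ) ^ α

/-- The variable sum exdeg index `SEI_a(G) = Σ_v d_v · a^{d_v}`. -/
noncomputable def SEI {n : ℕ} (G : SimpleGraph (Fin n)) (a : ℝ) : ℝ :=
  ∑ v : Fin n, (deg G v : ℝ) * a ^ (deg G v)

/-- The number of vertices of `G` having degree `d`. -/
noncomputable def countDeg {n : ℕ} (G : SimpleGraph (Fin n)) (d : ℕ) : ℕ :=
  Nat.card {v : Fin n // deg G v = d}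

/-- The number of branching vertices (vertices of degree greater than 2) of `G`. -/
noncomputable def branching {n : ℕ} (G : SimpleGraph (Fin n)) : ℕ :=
  Nat.card {v : Fin n // 2 < deg G v}

/-- The star graph on `Fin n`, with centre the vertex with value `0`. -/
def starGraph (n : ℕ) : SimpleGraph (Fin n) :=
  SimpleGraph.fromRel (fun u _ => u.val = 0)


noncomputable def ff (a : ℝ) (d : ℕ) : ℝ := d * a ^ d

lemma delta_mono {a : ℝ} (ha : 1 < a) (j : ℕ) :
    ff a (j+1) - ff a j < ff a (j+2) - ff a (j+1) := by
  have hp : (0:ℝ) < a ^ j := pow_pos (by linarith) j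
  simp only [ff]
  push_cast
  have e2 : a ^ (j+2) = a ^ j * a * a := by rw [pow_succ, pow_succ]
  rw [pow_succ, e2]
  have h2 : (0:ℝ) < ((j:ℝ)+2)*a - j := by nlinarith [Nat.cast_nonneg (α := ℝ) j]
  nlinarith [mul_pos hp (mul_pos (sub_pos.2 ha) h2)]

noncomputable def dd (a : ℝ) (j : ℕ) : ℝ := ff a (j+1) - ff a j

lemma dd_mono {a : ℝ} (ha : 1 < a) : StrictMono (dd a) :=
  strictMono_nat_of_lt_succ (fun j => delta_mono ha j)

lemma L2 {a : ℝ} (ha : 1 < a) (k : ℕ) :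
    ff a (k+1) - ff a 1 ≤ k * dd a k := by
  induction k with
  | zero => simp
  | succ k ih =>
      have h1 : dd a k ≤ dd a (k+1) := (dd_mono ha).le_iff_le.2 (by omega)
      have : ff a (k+2) - ff a 1 = (ff a (k+1) - ff a 1) + dd a (k+1) := by
        simp only [dd]; ring
      rw [this]
      push_cast
      nlinarith [Nat.cast_nonneg (α := ℝ) k]

lemma L3 {a : ℝ} (ha : 1 < a) (d k : ℕ) :
    (k : ℝ) * dd a d ≤ ff a (d+k) - ff a d := by
  induction k with
  | zero => simp
  | succ k ih =>
      have h1 : dd a d ≤ dd a (d+k) := (dd_mono ha).le_iff_le.2 (by omega)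
      have : ff a (d+(k+1)) - ff a d = (ff a (d+k) - ff a d) + dd a (d+k) := by
        simp only [dd, show d+(k+1) = (d+k)+1 from rfl]; ring
      rw [this]
      push_cast
      nlinarith

lemma chord_strict {a : ℝ} (ha : 1 < a) {d m : ℕ} (h1 : 2 ≤ d) (h2 : d < m) :
    ((m:ℝ)-1) * ff a d < ((m:ℝ)-d) * ff a 1 + ((d:ℝ)-1) * ff a m := by
  obtain ⟨k, rfl⟩ : ∃ k, d = k + 1 := ⟨d-1, by omega⟩
  have hA := L2 ha k
  have hB := L3 ha (k+1) (m - (k+1))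
  rw [show (k+1) + (m - (k+1)) = m by omega] at hB
  have hk : (1:ℝ) ≤ k := by exact_mod_cast (by omega : 1 ≤ k)
  have hmd : (1:ℝ) ≤ (m:ℝ) - (k+1) := by
    have : ((k+2:ℕ):ℝ) ≤ (m:ℕ) := by exact_mod_cast (by omega : k+2 ≤ m)
    push_cast at this; linarith
  have hcast : ((m - (k+1) : ℕ) : ℝ) = (m:ℝ) - (k+1) := by
    have : (k+1:ℕ) ≤ m := by omega
    push_cast [this]; ring
  rw [hcast] at hB
  have hdd : dd a k < dd a (k+1) := dd_mono ha (by omega)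
  -- (m-d)(ff d - ff 1) ≤ (m-d) k dd(k) < (m-d) k dd(k+1) ≤ k (ff m - ff d)
  have s1 : ((m:ℝ) - (k+1)) * (ff a (k+1) - ff a 1) ≤ ((m:ℝ) - (k+1)) * ((k:ℝ) * dd a k) :=
    mul_le_mul_of_nonneg_left hA (by linarith)
  have s2 : ((m:ℝ) - (k+1)) * ((k:ℝ) * dd a k) < ((m:ℝ) - (k+1)) * ((k:ℝ) * dd a (k+1)) := by
    apply mul_lt_mul_of_pos_left _ (by linarith)
    exact mul_lt_mul_of_pos_left hdd (by linarith)
  have s3 : ((k:ℝ)) * (((m:ℝ) - (k+1)) * dd a (k+1)) ≤ (k:ℝ) * (ff a m - ff a (k+1)) :=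
    mul_le_mul_of_nonneg_left hB (by linarith)
  push_cast
  nlinarith

lemma chord {a : ℝ} (ha : 1 < a) {d m : ℕ} (h1 : 1 ≤ d) (h2 : d ≤ m) :
    ((m:ℝ)-1) * ff a d ≤ ((m:ℝ)-d) * ff a 1 + ((d:ℝ)-1) * ff a m := by
  rcases eq_or_lt_of_le h1 with h | h
  · rw [← h]; push_cast; ring_nf; rfl
  rcases eq_or_lt_of_le h2 with h' | h'
  · subst h'; ring_nf; rfl
  exact le_of_lt (chord_strict ha (by omega) h')

section graphs
open SimpleGraph

lemma deg_eq {n : ℕ} (G : SimpleGraph (Fin n)) [DecidableRel G.Adj] (v : Fin n) :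
    deg G v = G.degree v := by
  rw [deg, ← card_neighborSet_eq_degree, Nat.card_eq_fintype_card]

lemma star_adj {n : ℕ} [NeZero n] (u v : Fin n) :
    (_root_.starGraph n).Adj u v ↔ u ≠ v ∧ (u = 0 ∨ v = 0) := by
  simp only [_root_.starGraph, SimpleGraph.fromRel_adj, Fin.ext_iff, Fin.val_zero]

lemma deg_star_zero {n : ℕ} [NeZero n] : deg (_root_.starGraph n) 0 = n - 1 := by
  have hset : (_root_.starGraph n).neighborSet 0 = ({0} : Set (Fin n))ᶜ := by
    ext v
    simp [SimpleGraph.neighborSet, star_adj, eq_comm]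
  rw [deg, hset, Nat.card_coe_set_eq]
  have := Set.ncard_add_ncard_compl ({0} : Set (Fin n))
  rw [Set.ncard_singleton, Nat.card_eq_fintype_card, Fintype.card_fin] at this
  omega

lemma deg_star_ne {n : ℕ} [NeZero n] (v : Fin n) (hv : v ≠ 0) :
    deg (_root_.starGraph n) v = 1 := by
  have hset : (_root_.starGraph n).neighborSet v = ({0} : Set (Fin n)) := by
    ext w
    simp only [SimpleGraph.mem_neighborSet, star_adj, Set.mem_singleton_iff]
    constructor
    · rintro ⟨h1, h2 | h2⟩
      · exact absurd h2 hv
      · exact h2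
    · rintro rfl; exact ⟨hv, Or.inr rfl⟩
  rw [deg, hset, Nat.card_coe_set_eq, Set.ncard_singleton]

lemma deg_iso {n : ℕ} {G G' : SimpleGraph (Fin n)} (φ : G ≃g G') (v : Fin n) :
    deg G v = deg G' (φ v) :=
  Nat.card_congr (φ.mapNeighborSet v)

lemma star_of_degs {n : ℕ} (hn : 4 ≤ n) (T : SimpleGraph (Fin n))
    (hsum : ∑ v : Fin n, deg T v = 2 * (n - 1))
    (h : ∀ v, deg T v = 1 ∨ deg T v = n - 1) :
    Nonempty (T ≃g _root_.starGraph n) := by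
  classical
  haveI : NeZero n := ⟨by omega⟩
  simp only [deg_eq] at h hsum ⊢
  -- there is a vertex of degree n-1
  obtain ⟨c, hc⟩ : ∃ c, T.degree c = n - 1 := by
    by_contra hno
    push_neg at hno
    have h1 : ∀ v, T.degree v = 1 := fun v => (h v).resolve_right (hno v)
    have : ∑ v : Fin n, T.degree v = n := by
      rw [Finset.sum_congr rfl (fun v _ => h1 v)]; simp
    omega
  -- c is adjacent to everything else
  have hcnbr : T.neighborFinset c = Finset.univ.erase c := by
    apply Finset.eq_of_subset_of_card_le
    · intro x hx
      rw [Finset.mem_erase]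
      exact ⟨fun hxc => (T.notMem_neighborFinset_self c) (hxc ▸ hx), Finset.mem_univ x⟩
    · rw [Finset.card_erase_of_mem (Finset.mem_univ c), Finset.card_univ, Fintype.card_fin,
        SimpleGraph.card_neighborFinset_eq_degree, hc]
  have hcadj : ∀ v, v ≠ c → T.Adj c v := by
    intro v hv
    have : v ∈ T.neighborFinset c := by
      rw [hcnbr, Finset.mem_erase]; exact ⟨hv, Finset.mem_univ v⟩
    exact (SimpleGraph.mem_neighborFinset _ _ _).1 this
  -- everything else is a leaf
  have hleaf : ∀ v, v ≠ c → T.degree v = 1 := by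
    intro v hv
    rcases h v with h1 | h1
    · exact h1
    · exfalso
      have hvc : v ∈ Finset.univ.erase c := by
        rw [Finset.mem_erase]; exact ⟨hv, Finset.mem_univ v⟩
      have e1 : ∑ x : Fin n, T.degree x
          = T.degree c + ∑ x ∈ Finset.univ.erase c, T.degree x := by
        exact (Finset.add_sum_erase _ (fun x => T.degree x) (Finset.mem_univ c)).symm
      have e2 : ∑ x ∈ Finset.univ.erase c, T.degree x
          = T.degree v + ∑ x ∈ (Finset.univ.erase c).erase v, T.degree x := by
        exact (Finset.add_sum_erase _ (fun x => T.degree x) hvc).symm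
      have e3 : ((Finset.univ.erase c).erase v).card • 1
          ≤ ∑ x ∈ (Finset.univ.erase c).erase v, T.degree x := by
        apply Finset.card_nsmul_le_sum
        intro x hx
        have hx1 : x ≠ v := (Finset.mem_erase.1 hx).1
        have hx2 : x ≠ c := (Finset.mem_erase.1 (Finset.mem_erase.1 hx).2).1
        have := hcadj x hx2
        have : 0 < T.degree x := by
          rw [T.degree_pos_iff_exists_adj]; exact ⟨c, this.symm⟩
        omega
      simp only [smul_eq_mul, mul_one] at e3
      have e4 : ((Finset.univ.erase c).erase v).card = n - 2 := by
        rw [Finset.card_erase_of_mem hvc, Finset.card_erase_of_mem (Finset.mem_univ c),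
          Finset.card_univ, Fintype.card_fin]
        omega
      omega
  -- leaves are adjacent only to c
  have hleafnbr : ∀ v, v ≠ c → T.neighborFinset v = {c} := by
    intro v hv
    symm
    apply Finset.eq_of_subset_of_card_le
    · rw [Finset.singleton_subset_iff, SimpleGraph.mem_neighborFinset]
      exact (hcadj v hv).symm
    · rw [SimpleGraph.card_neighborFinset_eq_degree, hleaf v hv, Finset.card_singleton]
  have hAdj : ∀ u v, T.Adj u v ↔ u ≠ v ∧ (u = c ∨ v = c) := by
    intro u v
    constructor
    · intro huv
      refine ⟨huv.ne, ?_⟩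
      by_contra hcc
      push_neg at hcc
      have : v ∈ T.neighborFinset u := (SimpleGraph.mem_neighborFinset _ _ _).2 huv
      rw [hleafnbr u hcc.1, Finset.mem_singleton] at this
      exact hcc.2 this
    · rintro ⟨hne, rfl | rfl⟩
      · exact hcadj v (Ne.symm hne)
      · exact (hcadj u hne).symm
  -- build the isomorphism
  refine ⟨⟨Equiv.swap c 0, ?_⟩⟩
  intro u v
  rw [star_adj, hAdj u v]
  constructor
  · rintro ⟨hne, h0 | h0⟩
    · refine ⟨fun hh => hne (hh ▸ rfl), ?_⟩
      left
      have := congrArg (Equiv.swap c 0) h0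
      simpa [Equiv.swap_apply_left] using this
    · refine ⟨fun hh => hne (hh ▸ rfl), ?_⟩
      right
      have := congrArg (Equiv.swap c 0) h0
      simpa [Equiv.swap_apply_left] using this
  · rintro ⟨hne, hu | hu⟩
    · exact ⟨fun hh => hne (Equiv.injective _ hh), Or.inl (by rw [hu, Equiv.swap_apply_left])⟩
    · exact ⟨fun hh => hne (Equiv.injective _ hh), Or.inr (by rw [hu, Equiv.swap_apply_left])⟩

end graphs


theorem stmt12 (n : ℕ) (hn : 4 ≤ n) (T : SimpleGraph (Fin n)) (hT : T.IsTree) :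
    ∀ a : ℝ, 1 < a →
      SEI T a ≤ ((n : ℝ) - 1) * a ^ (n - 1) + ((n : ℝ) - 1) * a ∧
      (SEI T a = ((n : ℝ) - 1) * a ^ (n - 1) + ((n : ℝ) - 1) * a ↔
        Nonempty (T ≃g starGraph n)) := by

  classical
  intro a ha
  haveI : NeZero n := ⟨by omega⟩
  set m : ℕ := n - 1 with hmdef
  have hmR : ((m : ℕ) : ℝ) = (n : ℝ) - 1 := by
    rw [hmdef, Nat.cast_sub (by omega : 1 ≤ n), Nat.cast_one]
  have hn2 : (0:ℝ) < (n:ℝ) - 2 := by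
    have : (4:ℝ) ≤ (n:ℝ) := by exact_mod_cast hn
    linarith
  -- degree facts
  have hd1 : ∀ v, 1 ≤ deg T v := by
    intro v
    rw [deg_eq]
    obtain ⟨u, hu⟩ : ∃ u : Fin n, u ≠ v :=
      Fintype.exists_ne_of_one_lt_card (by rw [Fintype.card_fin]; omega) v
    obtain ⟨p⟩ := hT.isConnected.preconnected v u
    cases p with
    | nil => exact absurd rfl hu
    | cons h q => exact (T.degree_pos_iff_exists_adj v).2 ⟨_, h⟩
  have hdm : ∀ v, deg T v ≤ m := by
    intro v
    have h := T.degree_lt_card_verts v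
    rw [Fintype.card_fin] at h
    rw [deg_eq]
    omega
  have hsum : ∑ v : Fin n, deg T v = 2 * m := by
    simp only [deg_eq]
    rw [SimpleGraph.sum_degrees_eq_twice_card_edges]
    have := hT.card_edgeFinset
    rw [Fintype.card_fin] at this
    omega
  have hDcast : ∑ v : Fin n, ((deg T v : ℕ) : ℝ) = 2 * ((n : ℝ) - 1) := by
    rw [← Nat.cast_sum, hsum, Nat.cast_mul, Nat.cast_two, hmR]
  have hSEI : SEI T a = ∑ v : Fin n, ff a (deg T v) := rfl
  have keyRHS : ∑ v : Fin n, (((m:ℝ) - (deg T v : ℝ)) * ff a 1 + ((deg T v : ℝ) - 1) * ff a m)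
      = ((n:ℝ) - 2) * (ff a m + ((n:ℝ)-1) * ff a 1) := by
    have hterm : ∀ v : Fin n, ((m:ℝ) - (deg T v:ℝ)) * ff a 1 + ((deg T v:ℝ) - 1) * ff a m
        = (((m:ℝ) * ff a 1 - ff a m) + (deg T v : ℝ) * (ff a m - ff a 1)) := fun v => by ring
    rw [Finset.sum_congr rfl (fun v _ => hterm v), Finset.sum_add_distrib,
      Finset.sum_const, ← Finset.sum_mul, hDcast]
    simp only [Finset.card_univ, Fintype.card_fin, nsmul_eq_mul, hmR]
    ring
  have hboundB : ((n:ℝ)-1) * a ^ m + ((n:ℝ)-1) * a = ff a m + ((n:ℝ)-1) * ff a 1 := by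
    simp only [ff, hmR, Nat.cast_one, pow_one]
    ring
  have sum_chord : ((n:ℝ)-2) * SEI T a ≤ ((n:ℝ)-2) * (ff a m + ((n:ℝ)-1) * ff a 1) := by
    have h1 : ((m:ℝ)-1) * SEI T a ≤ ((n:ℝ)-2) * (ff a m + ((n:ℝ)-1) * ff a 1) := by
      rw [hSEI, Finset.mul_sum, ← keyRHS]
      exact Finset.sum_le_sum fun v _ => chord ha (hd1 v) (hdm v)
    rw [hmR] at h1
    calc ((n:ℝ)-2) * SEI T a = ((n:ℝ)-1-1) * SEI T a := by ring
    _ ≤ _ := h1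
  have hle : SEI T a ≤ ((n:ℝ)-1) * a ^ m + ((n:ℝ)-1) * a := by
    rw [hboundB]
    exact le_of_mul_le_mul_left sum_chord hn2
  refine ⟨hle, ?_, ?_⟩
  · -- equality → star
    intro heq
    have hdich : ∀ v, deg T v = 1 ∨ deg T v = m := by
      by_contra hcon
      push_neg at hcon
      obtain ⟨v0, hv01, hv0m⟩ := hcon
      have hstrict := chord_strict ha (show 2 ≤ deg T v0 by have := hd1 v0; omega)
        (show deg T v0 < m by have := hdm v0; omega)
      have hlt : ((m:ℝ)-1) * SEI T a < ((n:ℝ)-2) * (ff a m + ((n:ℝ)-1) * ff a 1) := by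
        rw [hSEI, Finset.mul_sum, ← keyRHS]
        exact Finset.sum_lt_sum (fun v _ => chord ha (hd1 v) (hdm v))
          ⟨v0, Finset.mem_univ v0, hstrict⟩
      rw [hmR, heq, hboundB] at hlt
      have : ((n:ℝ)-1-1) * (ff a m + ((n:ℝ)-1) * ff a 1)
          = ((n:ℝ)-2) * (ff a m + ((n:ℝ)-1) * ff a 1) := by ring
      rw [this] at hlt
      exact lt_irrefl _ hlt
    apply star_of_degs hn T
    · rw [hmdef] at hsum; exact hsum
    · intro v; rw [← hmdef]; exact hdich v
  · -- star → equality
    rintro ⟨φ⟩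
    have hdich : ∀ v, deg T v = 1 ∨ deg T v = m := by
      intro v
      rw [deg_iso φ v]
      by_cases hv : φ v = 0
      · right; rw [hv, deg_star_zero, hmdef]
      · left; exact deg_star_ne _ hv
    have hterm : ∀ v : Fin n, ((m:ℝ)-1) * ff a (deg T v)
        = ((m:ℝ) - (deg T v:ℝ)) * ff a 1 + ((deg T v:ℝ) - 1) * ff a m := by
      intro v
      rcases hdich v with h | h <;> rw [h]
      · push_cast; ring
      · ring
    have hEq : ((n:ℝ)-2) * SEI T a = ((n:ℝ)-2) * (ff a m + ((n:ℝ)-1) * ff a 1) := by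
      have h1 : ((m:ℝ)-1) * SEI T a = ((n:ℝ)-2) * (ff a m + ((n:ℝ)-1) * ff a 1) := by
        rw [hSEI, Finset.mul_sum, ← keyRHS]
        exact Finset.sum_congr rfl (fun v _ => hterm v)
      rw [hmR] at h1
      calc ((n:ℝ)-2) * SEI T a = ((n:ℝ)-1-1) * SEI T a := by ring
      _ = _ := h1
    rw [hboundB]
    exact mul_left_cancel₀ (ne_of_gt hn2) hEq
end

section
/- If T is a tree on n vertices that is not a caterpillar, then there exists a caterpillar T' on n vertices having the same degree sequence as T. -/
open Finset Real
open scoped Classical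

/-- A caterpillar is a tree which becomes a path graph upon deleting all
pendent vertices (and their incident edges). -/
noncomputable def IsCaterpillar {n : ℕ} (G : SimpleGraph (Fin n)) : Prop :=
  G.IsTree ∧
    ∃ m : ℕ, Nonempty ((G.induce {v | deg G v ≠ 1}) ≃g SimpleGraph.pathGraph m)

section DegCalc
variable {n : ℕ} (G : SimpleGraph (Fin n))

lemma deg_eq_card_filter (v : Fin n) :
    deg G v = (univ.filter (fun u : Fin n => G.Adj v u)).card := by
  classical
  simp only [deg, SimpleGraph.neighborSet, Set.coe_setOf, Nat.card_eq_fintype_card]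
  convert Fintype.card_subtype _

lemma countDeg_eq_card_filter (d : ℕ) :
    Nat.card {v : Fin n // deg G v = d} = (univ.filter (fun v : Fin n => deg G v = d)).card := by
  classical
  rw [Nat.card_eq_fintype_card]
  convert Fintype.card_subtype _

end DegCalc

section ParentGraph
variable {n : ℕ} (p : Fin n → Fin n) (hp : ∀ v : Fin n, v.val ≠ 0 → p v < v)

def pgraph : SimpleGraph (Fin n) where
  Adj u v := (u.val ≠ 0 ∧ p u = v) ∨ (v.val ≠ 0 ∧ p v = u)
  symm := ⟨fun u v h => h.symm⟩
  loopless := ⟨fun v h => by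
    rcases h with ⟨h0, he⟩ | ⟨h0, he⟩ <;> exact absurd he (ne_of_lt (hp v h0))⟩

lemma pgraph_adj {u v : Fin n} :
    (pgraph p hp).Adj u v ↔ (u.val ≠ 0 ∧ p u = v) ∨ (v.val ≠ 0 ∧ p v = u) := Iff.rfl

lemma deg_pgraph (v : Fin n) :
    deg (pgraph p hp) v
      = (univ.filter (fun u : Fin n => u.val ≠ 0 ∧ p u = v)).card
        + (if v.val ≠ 0 then 1 else 0) := by
  classical
  rw [deg_eq_card_filter]
  have h2 : (univ.filter (fun u : Fin n => (pgraph p hp).Adj v u))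
      = (univ.filter (fun u : Fin n => u.val ≠ 0 ∧ p u = v))
        ∪ (univ.filter (fun u : Fin n => v.val ≠ 0 ∧ p v = u)) := by
    rw [← Finset.filter_or]
    apply Finset.filter_congr
    intro u _
    rw [pgraph_adj]
    tauto
  rw [h2, Finset.card_union_of_disjoint]
  · congr 1
    by_cases h0 : v.val = 0
    · simp [h0]
    · have : (univ.filter (fun u : Fin n => v.val ≠ 0 ∧ p v = u)) = {p v} := by
        ext u; simp [h0, eq_comm]
      rw [this]
      simp [h0]
  · rw [Finset.disjoint_left]
    rintro u hu hv
    simp only [mem_filter] at hu hv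
    obtain ⟨-, hu0, hpu⟩ := hu
    obtain ⟨-, hv0, hpv⟩ := hv
    have h1 := hp u hu0
    have h2 := hp v hv0
    rw [hpu] at h1; rw [hpv] at h2
    exact absurd (h2.trans h1) (lt_irrefl u)

lemma pgraph_connected (hn : 0 < n) : (pgraph p hp).Connected := by
  have key : ∀ m : ℕ, ∀ v : Fin n, v.val ≤ m → (pgraph p hp).Reachable v ⟨0, hn⟩ := by
    intro m
    induction m with
    | zero =>
      intro v hv
      have : v = ⟨0, hn⟩ := Fin.ext (Nat.le_zero.mp hv)
      rw [this]
    | succ m ih =>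
      intro v hv
      by_cases h0 : v.val = 0
      · have : v = ⟨0, hn⟩ := Fin.ext h0
        rw [this]
      · have hadj : (pgraph p hp).Adj v (p v) := Or.inl ⟨h0, rfl⟩
        exact hadj.reachable.trans (ih (p v) (by
          have := hp v h0
          omega))
  have : Nonempty (Fin n) := ⟨⟨0, hn⟩⟩
  exact ⟨fun u v => (key u.val u le_rfl).trans (key v.val v le_rfl).symm⟩

lemma pgraph_acyclic : (pgraph p hp).IsAcyclic := by
  classical
  intro v c hc
  have hsne : c.support.toFinset.Nonempty := by
    simp [SimpleGraph.Walk.support_ne_nil, List.toFinset_eq_empty_iff, Finset.nonempty_iff_ne_empty]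
  set m := c.support.toFinset.max' hsne with hm
  have hmmem : m ∈ c.support := by
    have := c.support.toFinset.max'_mem hsne
    simpa using this
  have hmax : ∀ x ∈ c.support, x ≤ m := fun x hx =>
    c.support.toFinset.le_max' x (by simpa using hx)
  set c' := c.rotate m hmmem with hc'def
  have hc' : c'.IsCycle := hc.rotate hmmem
  have hsup : ∀ x ∈ c'.support, x ≤ m := by
    intro x hx
    rw [SimpleGraph.Walk.support_eq_cons] at hx
    rcases List.mem_cons.mp hx with h | h
    · exact h ▸ le_rfl
    · exact hmax x (List.mem_of_mem_tail
        (((SimpleGraph.Walk.support_rotate c m hmmem).perm.mem_iff).mp h))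
  rcases (SimpleGraph.Walk.not_nil_iff.mp hc'.not_nil) with ⟨b, hadj, q, hq⟩
  rw [hq, SimpleGraph.Walk.cons_isCycle_iff] at hc'
  obtain ⟨hqpath, hedge⟩ := hc'
  -- b is in support of c'
  have hbsup : b ∈ c'.support := by
    rw [hq, SimpleGraph.Walk.support_cons]
    exact List.mem_cons_of_mem _ q.start_mem_support
  have hbm : b < m := lt_of_le_of_ne (hsup b hbsup) hadj.ne'
  -- decompose q.reverse
  obtain ⟨d, hadj2, r, hr⟩ := SimpleGraph.Walk.exists_eq_cons_of_ne hadj.ne q.reverse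
  have hdsup : d ∈ c'.support := by
    rw [hq, SimpleGraph.Walk.support_cons]
    refine List.mem_cons_of_mem _ ?_
    have : d ∈ q.reverse.support := by
      rw [hr, SimpleGraph.Walk.support_cons]
      exact List.mem_cons_of_mem _ r.start_mem_support
    rwa [SimpleGraph.Walk.support_reverse, List.mem_reverse] at this
  have hdm : d < m := lt_of_le_of_ne (hsup d hdsup) hadj2.ne'
  -- from adjacency, b = p m and d = p m
  have hbp : p m = b := by
    rcases hadj with ⟨_, h⟩ | ⟨h0, h⟩
    · exact h
    · exact absurd (h ▸ hp b h0) (by omega)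
  have hdp : p m = d := by
    rcases hadj2 with ⟨_, h⟩ | ⟨h0, h⟩
    · exact h
    · exact absurd (h ▸ hp d h0) (by omega)
  -- hence first edge appears in q.edges
  have hmem : s(m, d) ∈ q.edges := by
    have : s(m, d) ∈ q.reverse.edges := by
      rw [hr, SimpleGraph.Walk.edges_cons]
      exact List.mem_cons_self
    rwa [SimpleGraph.Walk.edges_reverse, List.mem_reverse] at this
  rw [← hdp, hbp] at hmem
  exact hedge hmem

lemma pgraph_isTree (hn : 0 < n) : (pgraph p hp).IsTree :=
  ⟨pgraph_connected p hp hn, pgraph_acyclic p hp⟩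

end ParentGraph


section Cater

variable (n k : ℕ) (D : ℕ → ℕ)

/-- number of leaf children of spine vertex `i` -/
def cfun (i : ℕ) : ℕ := D i - (if 1 ≤ i then 1 else 0) - (if i + 1 < k then 1 else 0)

/-- cumulative sums -/
def Afun (i : ℕ) : ℕ := ∑ t ∈ range i, cfun k D t

/-- spine vertex to which leaf `t` is attached -/
def afun (t : ℕ) : ℕ := ((range k).filter (fun i => Afun k D (i + 1) ≤ t)).card

variable {n k D}
variable (hk1 : 1 ≤ k) (hkn : k < n) (hD2 : ∀ i, i < k → 2 ≤ D i)
  (hsum : ∑ i ∈ range k, D i = n + k - 2)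

include hD2 in
lemma cfun_spec : ∀ i, i < k →
    cfun k D i + (if 1 ≤ i then 1 else 0) + (if i + 1 < k then 1 else 0) = D i := by
  intro i hi
  have := hD2 i hi
  unfold cfun
  split_ifs <;> omega

lemma Afun_mono : Monotone (Afun k D) := by
  intro i j hij
  exact Finset.sum_le_sum_of_subset (Finset.range_subset_range.mpr hij)

include hk1 hkn hD2 hsum in
lemma Afun_k : Afun k D k = n - k := by
  have h1 : ∑ i ∈ range k, D i
      = Afun k D k + (∑ i ∈ range k, if 1 ≤ i then 1 else 0)
          + (∑ i ∈ range k, if i + 1 < k then 1 else 0) := by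
    unfold Afun
    rw [← Finset.sum_add_distrib, ← Finset.sum_add_distrib]
    exact (Finset.sum_congr rfl (fun i hi => (cfun_spec hD2 i (mem_range.mp hi)).symm))
  have h2 : (∑ i ∈ range k, if 1 ≤ i then 1 else 0) = k - 1 := by
    rw [Finset.sum_boole]
    have : (range k).filter (fun i => 1 ≤ i) = Ico 1 k := by
      ext i; simp [mem_range, mem_Ico]; omega
    rw [this]
    simp [Nat.card_Ico]
  have h3 : (∑ i ∈ range k, if i + 1 < k then 1 else 0) = k - 1 := by
    rw [Finset.sum_boole]
    have : (range k).filter (fun i => i + 1 < k) = range (k - 1) := by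
      ext i; simp [mem_range]; omega
    rw [this]
    simp
  rw [h2, h3, hsum] at h1
  omega

lemma afun_lt (hk1 : 1 ≤ k) {t : ℕ} (ht : t < Afun k D k) : afun k D t < k := by
  by_contra hge
  push_neg at hge
  have hle : afun k D t ≤ k := by
    calc afun k D t ≤ (range k).card := Finset.card_filter_le _ _
    _ = k := Finset.card_range k
  have hcard : afun k D t = k := le_antisymm hle hge
  have hfull : (range k).filter (fun i => Afun k D (i + 1) ≤ t) = range k :=
    Finset.eq_of_subset_of_card_le (Finset.filter_subset _ _)
      (by rw [Finset.card_range]; exact hcard.ge)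
  have hmem : k - 1 ∈ (range k).filter (fun i => Afun k D (i + 1) ≤ t) := by
    rw [hfull]; exact mem_range.mpr (by omega)
  rw [mem_filter, show k - 1 + 1 = k by omega] at hmem
  exact absurd hmem.2 (by omega)

lemma afun_eq_iff {t i : ℕ} (ht : t < Afun k D k) (hi : i < k) :
    afun k D t = i ↔ Afun k D i ≤ t ∧ t < Afun k D (i + 1) := by
  constructor
  · intro h
    constructor
    · by_contra hlt
      push_neg at hlt
      -- t < Afun i ; then filter = range i with i ≥ 1 gives contradiction
      have hi1 : 1 ≤ i := by
        rcases Nat.eq_zero_or_pos i with h0 | h0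
        · rw [h0] at hlt; simp [Afun] at hlt
        · exact h0
      have hsub : (range k).filter (fun i' => Afun k D (i' + 1) ≤ t) ⊆ range i := by
        intro i' hi'
        rw [mem_filter] at hi'
        rw [mem_range]
        by_contra hge
        push_neg at hge
        have : Afun k D i ≤ Afun k D (i' + 1) := Afun_mono (by omega)
        omega
      have heq : (range k).filter (fun i' => Afun k D (i' + 1) ≤ t) = range i := by
        apply Finset.eq_of_subset_of_card_le hsub
        rw [Finset.card_range]
        unfold afun at h
        omega
      have : i - 1 ∈ (range k).filter (fun i' => Afun k D (i' + 1) ≤ t) := by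
        rw [heq]; exact mem_range.mpr (by omega)
      rw [mem_filter] at this
      have : Afun k D (i - 1 + 1) ≤ t := this.2
      rw [show i - 1 + 1 = i by omega] at this
      omega
    · by_contra hge
      push_neg at hge
      have hsub : range (i + 1) ⊆ (range k).filter (fun i' => Afun k D (i' + 1) ≤ t) := by
        intro i' hi'
        rw [mem_range] at hi'
        rw [mem_filter, mem_range]
        refine ⟨by omega, ?_⟩
        exact le_trans (Afun_mono (by omega : i' + 1 ≤ i + 1)) hge
      have := Finset.card_le_card hsub
      rw [Finset.card_range] at this
      unfold afun at h
      omega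
  · rintro ⟨h1, h2⟩
    have heq : (range k).filter (fun i' => Afun k D (i' + 1) ≤ t) = range i := by
      ext i'
      rw [mem_filter, mem_range, mem_range]
      constructor
      · rintro ⟨hik, hle⟩
        by_contra hge
        push_neg at hge
        have : Afun k D (i + 1) ≤ Afun k D (i' + 1) := Afun_mono (by omega)
        omega
      · intro hlt
        exact ⟨by omega, le_trans (Afun_mono (by omega : i' + 1 ≤ i)) h1⟩
    unfold afun
    rw [heq, Finset.card_range]

include hk1 hkn hD2 hsum in
lemma afun_fiber {i : ℕ} (hi : i < k) :
    (range (n - k)).filter (fun t => afun k D t = i) = Ico (Afun k D i) (Afun k D (i + 1)) := by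
  have hAk : Afun k D k = n - k := Afun_k hk1 hkn hD2 hsum
  ext t
  rw [mem_filter, mem_range, mem_Ico]
  constructor
  · rintro ⟨ht, h⟩
    exact (afun_eq_iff (by omega) hi).mp h
  · rintro ⟨h1, h2⟩
    have htk : t < Afun k D k := lt_of_lt_of_le h2 (Afun_mono (by omega))
    exact ⟨by omega, (afun_eq_iff htk hi).mpr ⟨h1, h2⟩⟩

include hk1 hkn hD2 hsum in
lemma afun_fiber_card {i : ℕ} (hi : i < k) :
    ((range (n - k)).filter (fun t => afun k D t = i)).card = cfun k D i := by
  rw [afun_fiber hk1 hkn hD2 hsum hi, Nat.card_Ico]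
  have : Afun k D (i + 1) = Afun k D i + cfun k D i := Finset.sum_range_succ _ _
  omega

end Cater

section Build
variable {n k : ℕ} {D : ℕ → ℕ}

def pmap (hk1 : 1 ≤ k) (hkn : k < n) : Fin n → Fin n := fun v =>
  if _h : v.val < k then ⟨v.val - 1, by omega⟩
  else ⟨min (afun k D (v.val - k)) (k - 1), by omega⟩

lemma pmap_lt (hk1 : 1 ≤ k) (hkn : k < n) :
    ∀ v : Fin n, v.val ≠ 0 → pmap (D := D) hk1 hkn v < v := by
  intro v hv
  rw [Fin.lt_def]
  unfold pmap
  split_ifs with h <;> simp <;> omega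

lemma pmap_val_lt (hk1 : 1 ≤ k) (hkn : k < n) {v : Fin n} (h : v.val < k) :
    (pmap (D := D) hk1 hkn v).val = v.val - 1 := by simp [pmap, h]

lemma pmap_val_ge (hk1 : 1 ≤ k) (hkn : k < n)
    (hAk : Afun k D k = n - k) {v : Fin n} (h : ¬ v.val < k) :
    (pmap (D := D) hk1 hkn v).val = afun k D (v.val - k) := by
  have hlt : afun k D (v.val - k) < k := by
    apply afun_lt hk1
    rw [hAk]
    omega
  simp only [pmap, h, dif_neg]
  simp
  omega

end Build

section Build2
variable {n k : ℕ} {D : ℕ → ℕ}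
variable (hk1 : 1 ≤ k) (hkn : k < n) (hD2 : ∀ i, i < k → 2 ≤ D i)
  (hsum : ∑ i ∈ range k, D i = n + k - 2)

include hk1 hkn hD2 hsum in
lemma deg_build (v : Fin n) :
    deg (pgraph (pmap (D := D) hk1 hkn) (pmap_lt hk1 hkn)) v
      = if v.val < k then D v.val else 1 := by
  have hAk : Afun k D k = n - k := Afun_k hk1 hkn hD2 hsum
  rw [deg_pgraph]
  set p := pmap (D := D) hk1 hkn with hpdef
  have hsplit : (univ.filter (fun u : Fin n => u.val ≠ 0 ∧ p u = v))
      = (univ.filter (fun u : Fin n => (u.val ≠ 0 ∧ p u = v) ∧ u.val < k))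
        ∪ (univ.filter (fun u : Fin n => (u.val ≠ 0 ∧ p u = v) ∧ ¬ u.val < k)) := by
    ext u; simp only [mem_filter, mem_union]; tauto
  rw [hsplit, Finset.card_union_of_disjoint (by
    rw [Finset.disjoint_left]; rintro u hu hv'
    simp only [mem_filter] at hu hv'; tauto)]
  by_cases hik : v.val < k
  · have hS1 : (univ.filter (fun u : Fin n => (u.val ≠ 0 ∧ p u = v) ∧ u.val < k)).card
        = if v.val + 1 < k then 1 else 0 := by
      split_ifs with hvk
      · rw [Finset.card_eq_one]
        refine ⟨⟨v.val + 1, by omega⟩, ?_⟩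
        ext u
        simp only [mem_filter, mem_univ, true_and, mem_singleton]
        constructor
        · rintro ⟨⟨h0, hpu⟩, hk'⟩
          have h1 := pmap_val_lt (D := D) hk1 hkn hk'
          rw [← hpdef] at h1
          have h2 : (p u).val = v.val := by rw [hpu]
          apply Fin.ext
          show u.val = v.val + 1
          omega
        · rintro rfl
          refine ⟨⟨by simp, ?_⟩, by simpa using hvk⟩
          have h1 := pmap_val_lt (D := D) hk1 hkn (v := ⟨v.val + 1, by omega⟩) (by simpa using hvk)
          rw [← hpdef] at h1
          exact Fin.ext (by simpa using h1)
      · rw [Finset.card_eq_zero, Finset.eq_empty_iff_forall_notMem]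
        intro u hu
        simp only [mem_filter, mem_univ, true_and] at hu
        obtain ⟨⟨h0, hpu⟩, hk'⟩ := hu
        have h1 := pmap_val_lt (D := D) hk1 hkn hk'
        rw [← hpdef] at h1
        have h2 : (p u).val = v.val := by rw [hpu]
        omega
    have hS2 : (univ.filter (fun u : Fin n => (u.val ≠ 0 ∧ p u = v) ∧ ¬ u.val < k)).card
        = cfun k D v.val := by
      rw [← afun_fiber_card hk1 hkn hD2 hsum hik]
      refine Finset.card_bij' (fun u _ => u.val - k)
        (fun t ht => ⟨t + k, by have := mem_range.mp (mem_filter.mp ht).1; omega⟩)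
        ?_ ?_ ?_ ?_
      · intro u hu
        simp only [mem_filter, mem_univ, true_and] at hu ⊢
        obtain ⟨⟨h0, hpu⟩, hk'⟩ := hu
        have h1 := pmap_val_ge (D := D) hk1 hkn hAk hk'
        rw [← hpdef] at h1
        have h2 : (p u).val = v.val := by rw [hpu]
        rw [mem_range]
        exact ⟨by omega, by omega⟩
      · intro t ht
        simp only [mem_filter, mem_univ, true_and, mem_range] at ht ⊢
        obtain ⟨htr, hta⟩ := ht
        have hge : ¬ (t + k) < k := by omega
        have h1 := pmap_val_ge (D := D) hk1 hkn hAk (v := ⟨t + k, by omega⟩) (by simpa using hge)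
        rw [← hpdef] at h1
        refine ⟨⟨show t + k ≠ 0 by omega, ?_⟩, show ¬ t + k < k by omega⟩
        apply Fin.ext
        rw [h1]
        show afun k D (t + k - k) = v.val
        rw [show t + k - k = t by omega]
        exact hta
      · intro u hu
        simp only [mem_filter, mem_univ, true_and] at hu
        exact Fin.ext (by simp; omega)
      · intro t ht
        simp only [mem_range, mem_filter] at ht
        simp
    rw [hS1, hS2]
    have hc := cfun_spec hD2 v.val hik
    simp only [if_pos hik]
    split_ifs at hc ⊢ <;> omega
  · have h1 : (univ.filter (fun u : Fin n => (u.val ≠ 0 ∧ p u = v) ∧ u.val < k)) = ∅ := by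
      rw [Finset.eq_empty_iff_forall_notMem]
      intro u hu
      simp only [mem_filter, mem_univ, true_and] at hu
      obtain ⟨⟨h0, hpu⟩, hk'⟩ := hu
      have hh := pmap_val_lt (D := D) hk1 hkn hk'
      rw [← hpdef] at hh
      have h2 : (p u).val = v.val := by rw [hpu]
      omega
    have h2 : (univ.filter (fun u : Fin n => (u.val ≠ 0 ∧ p u = v) ∧ ¬ u.val < k)) = ∅ := by
      rw [Finset.eq_empty_iff_forall_notMem]
      intro u hu
      simp only [mem_filter, mem_univ, true_and] at hu
      obtain ⟨⟨h0, hpu⟩, hk'⟩ := hu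
      have hh := pmap_val_ge (D := D) hk1 hkn hAk hk'
      rw [← hpdef] at hh
      have h3 : (p u).val = v.val := by rw [hpu]
      have h4 : afun k D (u.val - k) < k := by
        apply afun_lt hk1
        rw [hAk]
        omega
      omega
    rw [h1, h2]
    simp only [Finset.card_empty, if_neg hik]
    have : v.val ≠ 0 := by omega
    simp [this]

include hk1 hkn in
lemma adj_build {u v : Fin n} (hu : u.val < k) (hv : v.val < k) :
    (pgraph (pmap (D := D) hk1 hkn) (pmap_lt hk1 hkn)).Adj u v
      ↔ (u.val + 1 = v.val ∨ v.val + 1 = u.val) := by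
  rw [pgraph_adj]
  have hu' := pmap_val_lt (D := D) hk1 hkn hu
  have hv' := pmap_val_lt (D := D) hk1 hkn hv
  constructor
  · rintro (⟨h0, he⟩ | ⟨h0, he⟩)
    · have : (pmap (D := D) hk1 hkn u).val = v.val := by rw [he]
      omega
    · have : (pmap (D := D) hk1 hkn v).val = u.val := by rw [he]
      omega
  · rintro (h | h)
    · refine Or.inr ⟨by omega, Fin.ext ?_⟩
      omega
    · refine Or.inl ⟨by omega, Fin.ext ?_⟩
      omega

end Build2

section Final

variable {n : ℕ} (T : SimpleGraph (Fin n))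

theorem final_main (hT : T.IsTree) :
    ∃ T' : SimpleGraph (Fin n), (T'.IsTree ∧
      ∃ m : ℕ, Nonempty ((T'.induce {v | deg T' v ≠ 1}) ≃g SimpleGraph.pathGraph m)) ∧
      ∀ d : ℕ, countDeg T' d = countDeg T d := by
  classical
  have hn0 : 0 < n := by
    obtain ⟨v⟩ := hT.isConnected.nonempty
    exact v.pos
  -- handshake
  have hdegsum : ∑ v : Fin n, deg T v = 2 * (n - 1) := by
    have h1 : ∀ v, deg T v = T.degree v := by
      intro v
      rw [deg, Nat.card_eq_fintype_card]
      exact SimpleGraph.card_neighborSet_eq_degree _ _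
    rw [Finset.sum_congr rfl fun v _ => h1 v, SimpleGraph.sum_degrees_eq_twice_card_edges]
    have h2 := hT.card_edgeFinset
    rw [Fintype.card_fin] at h2
    omega
  -- min degree
  have hdeg1 : 2 ≤ n → ∀ v : Fin n, 1 ≤ deg T v := by
    intro h2n v
    haveI : Nontrivial (Fin n) := Fin.nontrivial_iff_two_le.mpr h2n
    obtain ⟨w, hw⟩ := exists_ne v
    obtain ⟨pw⟩ := hT.isConnected.preconnected v w
    have hne : ∃ u, T.Adj v u := by
      cases pw with
      | nil => exact absurd rfl hw.symm
      | cons h q => exact ⟨_, h⟩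
    obtain ⟨u, hu⟩ := hne
    have : Nonempty (T.neighborSet v) := ⟨u, hu⟩
    exact Nat.card_pos
  -- sorting equiv
  set σ : Equiv.Perm (Fin n) := Tuple.sort (fun v => deg T v) with hσ
  set e : Fin n ≃ Fin n := (Fin.revPerm : Equiv.Perm (Fin n)).trans σ with he
  have hanti : ∀ i j : Fin n, i ≤ j → deg T (e j) ≤ deg T (e i) := by
    intro i j hij
    have := Tuple.monotone_sort (fun v => deg T v)
      (a := Fin.rev j) (b := Fin.rev i) (Fin.rev_le_rev.mpr hij)
    simpa [he, hσ] using this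
  set k : ℕ := (univ.filter (fun i : Fin n => 2 ≤ deg T (e i))).card with hk
  have hkn' : k ≤ n := by
    rw [hk]
    calc _ ≤ (univ : Finset (Fin n)).card := Finset.card_filter_le _ _
    _ = n := by simp
  have hkiff : ∀ i : Fin n, 2 ≤ deg T (e i) ↔ i.val < k := by
    intro i
    constructor
    · intro h2
      have hsub : Finset.Iic i ⊆ univ.filter (fun j : Fin n => 2 ≤ deg T (e j)) := by
        intro j hj
        rw [Finset.mem_Iic] at hj
        rw [mem_filter]
        exact ⟨mem_univ _, le_trans h2 (hanti j i hj)⟩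
      have := Finset.card_le_card hsub
      rw [Fin.card_Iic] at this
      omega
    · intro hik
      by_contra hlt
      push_neg at hlt
      have hsub : univ.filter (fun j : Fin n => 2 ≤ deg T (e j)) ⊆ Finset.Iio i := by
        intro j hj
        rw [mem_filter] at hj
        rw [Finset.mem_Iio]
        by_contra hge
        push_neg at hge
        exact absurd (le_trans hj.2 (hanti i j hge)) (by omega)
      have := Finset.card_le_card hsub
      rw [Fin.card_Iio] at this
      omega
  -- countDeg through e
  have hcount : ∀ d, countDeg T d = Nat.card {i : Fin n // deg T (e i) = d} := by
    intro d
    exact (Nat.card_congr (Equiv.subtypeEquiv e (fun i => Iff.rfl))).symm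
  by_cases hn1 : n = 1
  · -- single vertex
    subst hn1
    refine ⟨T, ⟨hT, 1, ?_⟩, fun d => rfl⟩
    have hbot : T = ⊥ := by
      ext u v
      simp only [SimpleGraph.bot_adj, iff_false]
      intro h
      exact h.ne (Subsingleton.elim u v)
    have hdeg0 : ∀ v : Fin 1, deg T v = 0 := by
      intro v
      rw [hbot]
      simp [deg]
    refine ⟨⟨equivOfSubsingletonOfSubsingleton
      (fun _ => (0 : Fin 1)) (fun _ => ⟨0, by simp [hdeg0]⟩), ?_⟩⟩
    intro a b
    simp only [SimpleGraph.pathGraph_adj]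
    constructor
    · intro h
      exfalso
      omega
    · intro h
      exfalso
      have := h.ne
      exact this (Subsingleton.elim _ _)
  · by_cases hk0 : k = 0
    · -- all degrees ≤ 1 : n = 2, T itself has empty non-pendent set; T' := T
      have h2n : 2 ≤ n := by omega
      have hall1 : ∀ v : Fin n, deg T v = 1 := by
        intro v
        have h1 := hdeg1 h2n v
        have h2 : ¬ 2 ≤ deg T (e (e.symm v)) := by
          rw [hkiff]
          omega
        rw [Equiv.apply_symm_apply] at h2
        omega
      refine ⟨T, ⟨hT, 0, ?_⟩, fun d => rfl⟩
      haveI hie : IsEmpty {v : Fin n // v ∈ {v | deg T v ≠ 1}} := by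
        constructor
        rintro ⟨v, hv⟩
        exact hv (hall1 v)
      refine ⟨⟨Equiv.equivOfIsEmpty _ _, ?_⟩⟩
      intro a b
      exact isEmptyElim a
    · -- main case
      have hk1 : 1 ≤ k := by omega
      have h2n : 2 ≤ n := by omega
      have hkn : k < n := by
        rcases Nat.lt_or_ge k n with h | h
        · exact h
        · exfalso
          have hkeq : k = n := by omega
          have : 2 * n ≤ ∑ i : Fin n, deg T (e i) := by
            calc 2 * n = ∑ _i : Fin n, 2 := by simp [mul_comm]
            _ ≤ _ := Finset.sum_le_sum (fun i _ => (hkiff i).mpr (by omega))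
          rw [Equiv.sum_comp e (fun v => deg T v), hdegsum] at this
          omega
      set D : ℕ → ℕ := fun i => if h : i < n then deg T (e ⟨i, h⟩) else 0 with hD
      have hD2 : ∀ i, i < k → 2 ≤ D i := by
        intro i hik
        rw [hD]
        simp only [dif_pos (by omega : i < n)]
        exact (hkiff ⟨i, by omega⟩).mpr hik
      have hDval : ∀ i : Fin n, D i.val = deg T (e i) := by
        intro i
        rw [hD]
        simp only [dif_pos i.isLt]
      have hsum : ∑ i ∈ range k, D i = n + k - 2 := by
        -- sum over Fin n splits
        have hsplit : (univ : Finset (Fin n)) = univ.filter (fun i : Fin n => i.val < k)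
            ∪ univ.filter (fun i : Fin n => ¬ i.val < k) := by
          ext i; simp only [mem_union, mem_filter, mem_univ, true_and]; tauto
        have htot : ∑ i : Fin n, deg T (e i) = 2 * (n - 1) := by
          rw [Equiv.sum_comp e (fun v => deg T v)]; exact hdegsum
        have hdisj : Disjoint (univ.filter (fun i : Fin n => i.val < k))
            (univ.filter (fun i : Fin n => ¬ i.val < k)) := by
          rw [Finset.disjoint_left]
          intro a ha hb
          simp only [mem_filter] at ha hb
          tauto
        have hsum2 : ∑ i : Fin n, deg T (e i)
            = (∑ i ∈ univ.filter (fun i : Fin n => i.val < k), deg T (e i))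
              + ∑ i ∈ univ.filter (fun i : Fin n => ¬ i.val < k), deg T (e i) := by
          rw [← Finset.sum_union hdisj, ← hsplit]
        have hleaf : ∑ i ∈ univ.filter (fun i : Fin n => ¬ i.val < k), deg T (e i)
            = n - k := by
          have hone : ∀ i ∈ univ.filter (fun i : Fin n => ¬ i.val < k), deg T (e i) = 1 := by
            intro i hi
            rw [mem_filter] at hi
            have hnot : ¬ 2 ≤ deg T (e i) := fun h => hi.2 ((hkiff i).mp h)
            have := hdeg1 h2n (e i)
            omega
          rw [Finset.sum_congr rfl hone]
          simp only [Finset.sum_const, smul_eq_mul, mul_one]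
          have : (univ.filter (fun i : Fin n => ¬ i.val < k)).card = n - k := by
            have := Finset.card_filter_add_card_filter_not
              (s := (univ : Finset (Fin n))) (p := fun i : Fin n => i.val < k)
            simp only [Finset.card_univ, Fintype.card_fin] at this
            have hkcard : (univ.filter (fun i : Fin n => i.val < k)).card = k := by
              rw [hk]
              congr 1
              ext i
              simp only [mem_filter, mem_univ, true_and]
              exact (hkiff i).symm
            omega
          rw [this]
        have hspine : ∑ i ∈ range k, D i
            = ∑ i ∈ univ.filter (fun i : Fin n => i.val < k), deg T (e i) := by
          refine Finset.sum_bij' (fun i hi => (⟨i, by rw [mem_range] at hi; omega⟩ : Fin n))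
            (fun j _ => j.val) ?_ ?_ ?_ ?_ ?_
          · intro i hi
            rw [mem_range] at hi
            simp only [mem_filter, mem_univ, true_and]
            exact hi
          · intro j hj
            rw [mem_filter] at hj
            rw [mem_range]
            exact hj.2
          · intro i hi
            rfl
          · intro j hj
            rfl
          · intro i hi
            rw [mem_range] at hi
            rw [hD]
            simp only [dif_pos (by omega : i < n)]
        rw [hspine]
        omega
      -- build the caterpillar
      set T' : SimpleGraph (Fin n) := pgraph (pmap (D := D) hk1 hkn) (pmap_lt hk1 hkn) with hT'
      have hdegT' : ∀ v : Fin n, deg T' v = if v.val < k then D v.val else 1 :=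
        fun v => deg_build hk1 hkn hD2 hsum v
      have hpoint : ∀ v : Fin n, deg T' v = deg T (e v) := by
        intro v
        rw [hdegT' v]
        by_cases hv : v.val < k
        · rw [if_pos hv, ← hDval v]
        · rw [if_neg hv]
          have hnot : ¬ 2 ≤ deg T (e v) := fun h => hv ((hkiff v).mp h)
          have := hdeg1 h2n (e v)
          omega
      refine ⟨T', ⟨pgraph_isTree _ _ hn0, k, ?_⟩, ?_⟩
      · -- iso to path graph
        have hset : ∀ v : Fin n, (deg T' v ≠ 1) ↔ v.val < k := by
          intro v
          rw [hdegT' v]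
          constructor
          · intro hne
            by_contra hv
            rw [if_neg hv] at hne
            exact hne rfl
          · intro hv
            rw [if_pos hv]
            have := hD2 v.val hv
            omega
        refine ⟨⟨⟨fun v => ⟨v.1.val, (hset v.1).mp v.2⟩,
          fun i => ⟨⟨i.val, lt_trans i.isLt hkn⟩, (hset _).mpr i.isLt⟩,
          fun v => by ext; rfl, fun i => by ext; rfl⟩, ?_⟩⟩
        intro a b
        simp only [Equiv.coe_fn_mk, SimpleGraph.pathGraph_adj]
        rw [SimpleGraph.comap_adj]
        change _ ↔ T'.Adj a.1 b.1
        exact (adj_build hk1 hkn ((hset a.1).mp a.2) ((hset b.1).mp b.2)).symm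
      · -- degree counts
        intro d
        rw [hcount d]
        unfold countDeg
        apply Nat.card_congr
        exact Equiv.subtypeEquivRight (fun v => by rw [hpoint v])

end Final


theorem stmt15 (n : ℕ) (T : SimpleGraph (Fin n)) (hT : T.IsTree)
    (hnc : ¬ IsCaterpillar T) :
    ∃ T' : SimpleGraph (Fin n), IsCaterpillar T' ∧
      ∀ d : ℕ, countDeg T' d = countDeg T d := by
  obtain ⟨T', h1, h2⟩ := final_main T hT
  exact ⟨T', h1, h2⟩
end

section
/- Let n ≥ 6 and 3 ≤ k ≤ n−2, and let T be a tree on n vertices with exactly k segments (equivalently, with exactly n − k − 1 vertices of degree 2). If T has two or more vertices of degree 4, then there exists a tree T' on n vertices with exactly k segments such that: (i) R⁰_α(T) > R⁰_α(T') for every real α with α < 0 or α > 1; (ii) R⁰_α(T) < R⁰_α(T') for every real α with 0 < α < 1; (iii) SEI_a(T) > SEI_a(T') for every real a > 1; and (iv) SEI_a(T) < SEI_a(T') for every real a with (1+√33)/16 < a < 1. -/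
open Finset Real

section Analytic

private lemma expc_sc {c p q a b : ℝ} (hc : c ≠ 0) (hpq : p ≠ q) (ha : 0 < a) (hb : 0 < b)
    (hab : a + b = 1) : Real.exp (c * (a * p + b * q)) < a * Real.exp (c * p) + b * Real.exp (c * q) := by
  have := strictConvexOn_exp.2 (Set.mem_univ (c * p)) (Set.mem_univ (c * q))
    (by exact fun h => hpq (mul_left_cancel₀ hc h)) ha hb hab
  simpa [smul_eq_mul, mul_add, mul_comm, mul_left_comm, mul_assoc] using this

private noncomputable def gfun (α : ℝ) : ℝ :=
  2 * Real.exp (Real.log (4/3) * α) + Real.exp (Real.log (1/3) * α)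

private lemma gfun_sc {p q a b : ℝ} (hpq : p ≠ q) (ha : 0 < a) (hb : 0 < b) (hab : a + b = 1) :
    gfun (a * p + b * q) < a * gfun p + b * gfun q := by
  have h1 := expc_sc (c := Real.log (4/3)) (Real.log_pos (by norm_num)).ne' hpq ha hb hab
  have h2 := expc_sc (c := Real.log (1/3)) (Real.log_neg (by norm_num) (by norm_num)).ne hpq ha hb hab
  unfold gfun; nlinarith [h1, h2]

private lemma gfun_zero : gfun 0 = 3 := by simp [gfun]; norm_num

private lemma gfun_one : gfun 1 = 3 := by
  have : Real.exp (Real.log (4/3)) = 4/3 := Real.exp_log (by norm_num)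
  have h2 : Real.exp (Real.log (1/3)) = 1/3 := Real.exp_log (by norm_num)
  simp only [gfun, mul_one, this, h2]; norm_num

private lemma gfun_gt (α : ℝ) (h : α < 0 ∨ 1 < α) : 3 < gfun α := by
  rcases h with h | h
  · have h1 : (0:ℝ) < 1 - α := by linarith
    have key := gfun_sc (p := α) (q := 1) (a := 1/(1-α)) (b := -α/(1-α))
      (by linarith) (by positivity) (div_pos (by linarith) h1)
      (by field_simp; ring)
    rw [gfun_one] at key
    have hc : (1/(1-α)) * α + (-α/(1-α)) * 1 = 0 := by field_simp; ring
    rw [hc, gfun_zero] at key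
    have key2 := mul_lt_mul_of_pos_right key h1
    have e : (1/(1-α) * gfun α + -α/(1-α) * 3) * (1-α) = gfun α - 3*α := by
      field_simp; ring
    rw [e] at key2; linarith
  · have h1 : (0:ℝ) < α := by linarith
    have key := gfun_sc (p := 0) (q := α) (a := 1 - 1/α) (b := 1/α)
      (ne_of_lt h1).symm.symm ?hA (by positivity) (by ring)
    case hA => rw [sub_pos, div_lt_one h1]; linarith
    rw [gfun_zero] at key
    have hc : (1 - 1/α) * 0 + (1/α) * α = 1 := by field_simp; ring
    rw [hc, gfun_one] at key
    have key2 := mul_lt_mul_of_pos_right key h1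
    have e : ((1 - 1/α) * 3 + 1/α * gfun α) * α = 3*α - 3 + gfun α := by
      field_simp
    rw [e] at key2; linarith

private lemma gfun_lt (α : ℝ) (h0 : 0 < α) (h1 : α < 1) : gfun α < 3 := by
  have key := gfun_sc (p := 0) (q := 1) (a := 1 - α) (b := α)
    (by norm_num) (by linarith) h0 (by ring)
  rw [gfun_zero, gfun_one] at key
  have e : (1 - α) * 0 + α * 1 = α := by ring
  rw [e] at key; linarith

private lemma gfun_eq (α : ℝ) : gfun α = (2 * (4:ℝ)^α + 1) / (3:ℝ)^α := by
  have h3 : (0:ℝ) < (3:ℝ)^α := Real.rpow_pos_of_pos (by norm_num) α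
  rw [eq_div_iff h3.ne']
  have e1 : Real.exp (Real.log (4/3) * α) = (4/3 : ℝ) ^ α := by
    rw [Real.rpow_def_of_pos (by norm_num)]
  have e2 : Real.exp (Real.log (1/3) * α) = (1/3 : ℝ) ^ α := by
    rw [Real.rpow_def_of_pos (by norm_num)]
  rw [gfun, e1, e2]
  rw [Real.div_rpow (by norm_num) (by norm_num), Real.div_rpow (by norm_num) (by norm_num)]
  rw [Real.one_rpow]
  field_simp

private lemma key_R0_gt (α : ℝ) (h : α < 0 ∨ 1 < α) : 3 * (3:ℝ)^α < 2 * 4^α + 1 := by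
  have h3 : (0:ℝ) < (3:ℝ)^α := Real.rpow_pos_of_pos (by norm_num) α
  have := gfun_gt α h
  rw [gfun_eq, lt_div_iff₀ h3] at this
  linarith

private lemma key_R0_lt (α : ℝ) (h0 : 0 < α) (h1 : α < 1) : 2 * (4:ℝ)^α + 1 < 3 * 3^α := by
  have h3 : (0:ℝ) < (3:ℝ)^α := Real.rpow_pos_of_pos (by norm_num) α
  have := gfun_lt α h0 h1
  rw [gfun_eq, div_lt_iff₀ h3] at this
  linarith

private lemma key_SEI_gt (a : ℝ) (h : 1 < a) : 3 * (3 * a^3) < 2 * (4 * a^4) + 1 * a^1 := by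
  nlinarith [sq_nonneg a, sq_nonneg (a-1), pow_pos (lt_trans one_pos h : (0:ℝ) < a) 2]

private lemma key_SEI_lt (a : ℝ) (hl : (1 + Real.sqrt 33) / 16 < a) (h1 : a < 1) :
    2 * (4 * a^4) + 1 * a^1 < 3 * (3 * a^3) := by
  have hs : Real.sqrt 33 ^ 2 = 33 := Real.sq_sqrt (by norm_num)
  have hs5 : 5 < Real.sqrt 33 := by nlinarith [Real.sqrt_nonneg 33]
  have ha0 : 0 < a := by nlinarith
  have h16 : Real.sqrt 33 < 16 * a - 1 := by nlinarith
  have hq : 0 < 8 * a^2 - a - 1 := by nlinarith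
  nlinarith [mul_pos ha0 (mul_pos (by linarith : (0:ℝ) < 1 - a) hq)]

end Analytic

section Graph
open SimpleGraph

variable {V : Type*}

private lemma reach_trans {G G' : SimpleGraph V} (h : ∀ a b, G.Adj a b → G'.Reachable a b)
    {a b : V} (hr : G.Reachable a b) : G'.Reachable a b := by
  obtain ⟨p⟩ := hr
  induction p with
  | nil => exact Reachable.refl _
  | cons h' p ih => exact (h _ _ h').trans ih

private lemma edgeSet_delete (G : SimpleGraph V) (e : Sym2 V) :
    (G \ fromEdgeSet {e}).edgeSet = G.edgeSet \ {e} := by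
  simp [edgeSet_sdiff, edgeSet_fromEdgeSet, edgeSet_sdiff_sdiff_isDiag]

private lemma cycle_delete_connected [Fintype V] {G : SimpleGraph V} (hc : G.Connected)
    {v : V} {c : G.Walk v v} (hcyc : c.IsCycle) {e : Sym2 V} (he : e ∈ c.edges) :
    (G \ fromEdgeSet {e}).Connected := by
  have hee : e ∈ G.edgeSet := c.edges_subset_edgeSet he
  rw [connected_iff] at hc ⊢
  refine ⟨fun a b => reach_trans ?_ (hc.1 a b), hc.2⟩
  intro a b hab
  by_cases hE : s(a,b) = e
  · refine (adj_and_reachable_delete_edges_iff_exists_cycle.mpr ⟨v, c, hcyc, hE ▸ he⟩).2.mono ?_ |>.mono (le_refl _)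
    · rw [hE]; exact le_rfl
  · exact Adj.reachable (by simp [sdiff_adj, fromEdgeSet_adj, hab, hE])

private lemma conn_card_le [Fintype V] :
    ∀ m (G : SimpleGraph V), G.edgeSet.ncard = m → G.Connected →
      Fintype.card V ≤ m + 1 := by
  intro m
  induction m using Nat.strong_induction_on with
  | _ m ih =>
    intro G hm hc
    classical
    by_cases hac : G.IsAcyclic
    · have ht : G.IsTree := ⟨hc, hac⟩
      have h1 := ht.card_edgeFinset
      rw [← Set.ncard_coe_finset, SimpleGraph.coe_edgeFinset] at h1
      omega
    · simp only [IsAcyclic] at hac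
      push_neg at hac
      obtain ⟨v, c, hcyc⟩ := hac
      have hne : c.edges ≠ [] := by
        have h3 := hcyc.three_le_length
        intro h
        rw [← SimpleGraph.Walk.length_edges, h] at h3
        simp at h3
      obtain ⟨e, he⟩ := List.exists_mem_of_ne_nil _ hne
      have hee : e ∈ G.edgeSet := c.edges_subset_edgeSet he
      have hconn := cycle_delete_connected hc hcyc he
      have hcard : (G \ fromEdgeSet {e}).edgeSet.ncard + 1 = m := by
        rw [edgeSet_delete, Set.ncard_diff_singleton_add_one hee (G.edgeSet.toFinite)]
        exact hm
      have hlt : (G \ fromEdgeSet {e}).edgeSet.ncard < m := by omega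
      have := ih _ hlt _ rfl hconn
      omega

private lemma tree_of_conn_card [Fintype V] (G : SimpleGraph V) (hc : G.Connected)
    (hcard : G.edgeSet.ncard + 1 = Fintype.card V) : G.IsTree := by
  classical
  refine ⟨hc, ?_⟩
  by_contra hac
  simp only [IsAcyclic] at hac
  push_neg at hac
  obtain ⟨v, c, hcyc⟩ := hac
  have hne : c.edges ≠ [] := by
    have h3 := hcyc.three_le_length
    intro h
    rw [← SimpleGraph.Walk.length_edges, h] at h3
    simp at h3
  obtain ⟨e, he⟩ := List.exists_mem_of_ne_nil _ hne
  have hee : e ∈ G.edgeSet := c.edges_subset_edgeSet he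
  have hconn := cycle_delete_connected hc hcyc he
  have hcard2 : (G \ fromEdgeSet {e}).edgeSet.ncard + 1 = G.edgeSet.ncard := by
    rw [edgeSet_delete, Set.ncard_diff_singleton_add_one hee (G.edgeSet.toFinite)]
  have := conn_card_le _ _ rfl hconn
  omega


lemma deg_eq_ncard {n : ℕ} (G : SimpleGraph (Fin n)) (v : Fin n) :
    deg G v = (G.neighborSet v).ncard := rfl

private lemma pick {n : ℕ} {G : SimpleGraph (Fin n)} (hG : G.IsTree) {u w : Fin n} (huw : u ≠ w)
    (hdeg : deg G w + 1 < deg G u) :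
    ∃ x, G.Adj u x ∧ w ≠ x ∧ ¬G.Adj w x ∧ (G \ fromEdgeSet {s(u,x)}).Reachable u w := by
  obtain ⟨q, hq, huniq⟩ := hG.existsUnique_path u w
  cases q with
  | nil => exact absurd rfl huw
  | @cons _ z _ h0 r =>
    have hur : u ∉ r.support := ((Walk.cons_isPath_iff h0 r).mp hq).2
    -- choose x
    have hne : ((G.neighborSet u) \ (G.neighborSet w ∪ {z})).Nonempty := by
      rw [Set.nonempty_iff_ne_empty]
      intro hemp
      have hsub : G.neighborSet u ⊆ G.neighborSet w ∪ {z} := by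
        rw [Set.diff_eq_empty] at hemp; exact hemp
      have hle := Set.ncard_le_ncard hsub ((G.neighborSet w ∪ {z}).toFinite)
      have hun := Set.ncard_union_le (G.neighborSet w) {z}
      rw [Set.ncard_singleton] at hun
      rw [deg_eq_ncard, deg_eq_ncard] at hdeg
      omega
    obtain ⟨x, hx⟩ := hne
    obtain ⟨hxu, hxnw⟩ := hx
    rw [Set.mem_union, not_or] at hxnw
    obtain ⟨hxw, hxz⟩ := hxnw
    rw [Set.mem_singleton_iff] at hxz
    rw [mem_neighborSet] at hxu hxw
    have hnotmem : s(u,x) ∉ (Walk.cons h0 r).edges := by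
      rw [Walk.edges_cons]
      intro hmem
      rcases List.mem_cons.mp hmem with hh | hh
      · rw [Sym2.eq_iff] at hh
        rcases hh with ⟨-, hh⟩ | ⟨hh1, hh2⟩
        · exact hxz hh
        · exact hxu.ne' hh2
      · exact hur (r.fst_mem_support_of_mem_edges hh)
    refine ⟨x, hxu, ?_, hxw, ?_⟩
    · intro hxw'
      subst hxw'
      have hp0 : (Walk.cons hxu (Walk.nil : G.Walk w w)).IsPath := by
        rw [Walk.cons_isPath_iff]
        exact ⟨Walk.IsPath.nil, by simp [huw]⟩
      have := huniq _ hp0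
      rw [← this] at hnotmem
      simp at hnotmem
    · refine ⟨(Walk.cons h0 r).transfer _ fun e he => ?_⟩
      have h1 : e ∈ G.edgeSet := (Walk.cons h0 r).edges_subset_edgeSet he
      have h2 : e ≠ s(u,x) := fun hh => hnotmem (hh ▸ he)
      simp only [edgeSet_sdiff, edgeSet_fromEdgeSet, edgeSet_sdiff_sdiff_isDiag,
        Set.mem_diff, Set.mem_singleton_iff]
      exact ⟨h1, h2⟩

private lemma step {n : ℕ} {G : SimpleGraph (Fin n)} (hG : G.IsTree) {u w x : Fin n}
    (huw : u ≠ w) (hwx : w ≠ x) (hux : G.Adj u x) (hnwx : ¬ G.Adj w x)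
    (hreach : (G \ fromEdgeSet {s(u,x)}).Reachable u w) :
    ∃ G' : SimpleGraph (Fin n), G'.IsTree ∧ deg G' u + 1 = deg G u ∧
      deg G' w = deg G w + 1 ∧ ∀ a, a ≠ u → a ≠ w → deg G' a = deg G a := by
  classical
  have hun : u ≠ x := hux.ne
  set G' : SimpleGraph (Fin n) := (G \ fromEdgeSet {s(u,x)}) ⊔ fromEdgeSet {s(w,x)} with hG'
  have hadj : ∀ a b, G'.Adj a b ↔
      (G.Adj a b ∧ s(a,b) ≠ s(u,x)) ∨ (s(a,b) = s(w,x) ∧ a ≠ b) := by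
    intro a b
    rw [hG', sup_adj, sdiff_adj, fromEdgeSet_adj, fromEdgeSet_adj]
    simp only [Set.mem_singleton_iff]
    have hne : G.Adj a b → a ≠ b := Adj.ne
    tauto
  -- edge set
  have hes : G'.edgeSet = (G.edgeSet \ {s(u,x)}) ∪ {s(w,x)} := by
    rw [hG', edgeSet_sup]
    rw [show ((G \ fromEdgeSet {s(u,x)}).edgeSet) = G.edgeSet \ {s(u,x)} by
      simp [edgeSet_sdiff, edgeSet_fromEdgeSet, edgeSet_sdiff_sdiff_isDiag]]
    congr 1
    rw [edgeSet_fromEdgeSet]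
    ext e
    simp only [Set.mem_diff, Set.mem_singleton_iff, Set.mem_setOf_eq]
    constructor
    · rintro ⟨h1, -⟩; exact h1
    · rintro rfl
      exact ⟨rfl, by simp [Sym2.mk_isDiag_iff]; exact hwx⟩
  have heG : s(u,x) ∈ G.edgeSet := G.mem_edgeSet.mpr hux
  have hfG : s(w,x) ∉ G.edgeSet := fun hh => hnwx (G.mem_edgeSet.mp hh)
  -- card count
  have hn_card : G.edgeSet.ncard + 1 = n := by
    have h1 := hG.card_edgeFinset
    rw [← Set.ncard_coe_finset, SimpleGraph.coe_edgeFinset] at h1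
    simpa using h1
  have hcard' : G'.edgeSet.ncard + 1 = n := by
    rw [hes, Set.union_singleton, Set.ncard_insert_of_notMem
      (fun hh => hfG hh.1) ((G.edgeSet \ {s(u,x)}).toFinite),
      Set.ncard_diff_singleton_add_one heG (G.edgeSet.toFinite)]
    exact hn_card
  -- connectivity
  have hle : (G \ fromEdgeSet {s(u,x)}) ≤ G' := le_sup_left
  have hwxadj : G'.Adj w x := by
    rw [hadj]
    exact Or.inr ⟨rfl, hwx⟩
  have huxreach : G'.Reachable u x := (hreach.mono hle).trans hwxadj.reachable
  have hconn : G'.Connected := by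
    rw [connected_iff]
    refine ⟨fun a b => reach_trans ?_ (hG.isConnected.preconnected a b),
      hG.isConnected.nonempty⟩
    intro a b hab
    by_cases hE : s(a,b) = s(u,x)
    · rw [Sym2.eq_iff] at hE
      rcases hE with ⟨ha, hb⟩ | ⟨ha, hb⟩
      · subst ha; subst hb; exact huxreach
      · subst ha; subst hb; exact huxreach.symm
    · exact Adj.reachable ((hadj a b).mpr (Or.inl ⟨hab, hE⟩))
  have htree : G'.IsTree := tree_of_conn_card G' hconn (by simpa using hcard')
  -- neighbor sets
  have hNu : G'.neighborSet u = G.neighborSet u \ {x} := by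
    ext a
    simp only [mem_neighborSet, Set.mem_diff, Set.mem_singleton_iff, hadj, Sym2.eq_iff,
      ne_eq]
    constructor
    · intro h; rcases h with ⟨h1, h2⟩ | ⟨h1, h2⟩ <;> tauto
    · intro h; tauto
  have hNw : G'.neighborSet w = insert x (G.neighborSet w) := by
    ext a
    simp only [mem_neighborSet, Set.mem_insert_iff, hadj, Sym2.eq_iff, ne_eq]
    constructor
    · intro h
      rcases h with ⟨h1, h2⟩ | ⟨h1, h2⟩
      · tauto
      · rcases h1 with ⟨h3, h4⟩ | ⟨h3, h4⟩ <;> tauto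
    · intro h
      rcases h with rfl | h1
      · tauto
      · refine Or.inl ⟨h1, ?_⟩
        have := h1.ne'
        tauto
  have hNx : G'.neighborSet x = insert w (G.neighborSet x \ {u}) := by
    ext a
    simp only [mem_neighborSet, Set.mem_insert_iff, Set.mem_diff, Set.mem_singleton_iff,
      hadj, Sym2.eq_iff, ne_eq]
    have hxw : x ≠ w := Ne.symm hwx
    have hxu : x ≠ u := Ne.symm hun
    constructor
    · intro h
      rcases h with ⟨h1, h2⟩ | ⟨h1, h2⟩
      · tauto
      · tauto
    · intro h
      rcases h with rfl | ⟨h1, h2⟩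
      · tauto
      · exact Or.inl ⟨h1, by tauto⟩
  have hNo : ∀ a, a ≠ u → a ≠ w → a ≠ x → G'.neighborSet a = G.neighborSet a := by
    intro a hau haw hax
    ext b
    simp only [mem_neighborSet, hadj, Sym2.eq_iff, ne_eq]
    constructor
    · intro h; rcases h with ⟨h1, h2⟩ | ⟨h1, h2⟩ <;> tauto
    · intro h1; exact Or.inl ⟨h1, by tauto⟩
  -- degrees
  have hxmem : x ∈ G.neighborSet u := hux
  have hxnw : x ∉ G.neighborSet w := hnwx
  have humem : u ∈ G.neighborSet x := hux.symm
  have hwnx : w ∉ G.neighborSet x := fun hh => hnwx (Adj.symm hh)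
  refine ⟨G', htree, ?_, ?_, ?_⟩
  · rw [deg_eq_ncard, deg_eq_ncard, hNu,
      Set.ncard_diff_singleton_add_one hxmem ((G.neighborSet u).toFinite)]
  · rw [deg_eq_ncard, deg_eq_ncard, hNw,
      Set.ncard_insert_of_notMem hxnw ((G.neighborSet w).toFinite)]
  · intro a hau haw
    by_cases hax : a = x
    · subst hax
      rw [deg_eq_ncard, deg_eq_ncard, hNx,
        Set.ncard_insert_of_notMem (fun hh => hwnx hh.1) ((G.neighborSet a \ {u}).toFinite),
        Set.ncard_diff_singleton_add_one humem ((G.neighborSet a).toFinite)]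
    · rw [deg_eq_ncard, deg_eq_ncard, hNo a hau haw hax]


private lemma exists_pendant {n : ℕ} (hn : 6 ≤ n) (T : SimpleGraph (Fin n)) (hT : T.IsTree)
    {u : Fin n} (hu : deg T u = 4) {v : Fin n} (hv : deg T v = 4) (huv : u ≠ v) :
    ∃ w, deg T w = 1 := by
  classical
  haveI : DecidableRel T.Adj := Classical.decRel _
  have hdeg_eq : ∀ a, deg T a = T.degree a := by
    intro a
    rw [deg, Nat.card_eq_fintype_card, card_neighborSet_eq_degree]
  have hpos : ∀ a, 1 ≤ deg T a := by
    intro a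
    have hnt : Nontrivial (Fin n) := by
      have : 1 < n := by omega
      exact Fin.nontrivial_iff_two_le.mpr (by omega)
    obtain ⟨b, hb⟩ := exists_ne a
    obtain ⟨p⟩ := hT.isConnected.preconnected a b
    cases p with
    | nil => exact absurd rfl hb.symm
    | cons h q =>
      rw [deg]
      have : Nat.card (T.neighborSet a) ≠ 0 := by
        rw [Nat.card_eq_fintype_card]
        simp only [← card_neighborSet_eq_degree] at *
        intro hc
        rw [Fintype.card_eq_zero_iff] at hc
        exact hc.elim' ⟨_, h⟩
      omega
  have hsum : ∑ a : Fin n, T.degree a = 2 * (n - 1) := by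
    rw [sum_degrees_eq_twice_card_edges]
    have h1 := hT.card_edgeFinset
    rw [Fintype.card_fin] at h1
    omega
  by_contra hno
  push_neg at hno
  have h2 : ∀ a, a ≠ u → a ≠ v → 2 ≤ T.degree a := by
    intro a hau hav
    have := hpos a
    have := hno a
    rw [← hdeg_eq]
    omega
  have hsplit : ∑ a : Fin n, T.degree a =
      T.degree u + (T.degree v + ∑ a ∈ (univ.erase u).erase v, T.degree a) := by
    rw [← Finset.add_sum_erase _ _ (mem_univ u),
      ← Finset.add_sum_erase _ _ (by simp [huv.symm] : v ∈ univ.erase u)]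
  have hbound : 2 * ((univ.erase u).erase v).card ≤ ∑ a ∈ (univ.erase u).erase v, T.degree a := by
    have := Finset.card_nsmul_le_sum ((univ.erase u).erase v) (fun a => T.degree a) 2
      (fun a ha => by
        simp only [mem_erase, mem_univ, and_true] at ha
        exact h2 a ha.2 ha.1)
    simpa [smul_eq_mul, mul_comm] using this
  have hcard : ((univ.erase u).erase v).card = n - 2 := by
    rw [Finset.card_erase_of_mem (by simp [huv.symm]), Finset.card_erase_of_mem (mem_univ u)]
    simp only [card_univ, Fintype.card_fin]
    omega
  have hu' : T.degree u = 4 := by rw [← hdeg_eq]; exact hu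
  have hv' : T.degree v = 4 := by rw [← hdeg_eq]; exact hv
  rw [hcard] at hbound
  rw [hsplit, hu', hv'] at hsum
  omega

end Graph

theorem stmt17 (n k : ℕ) (hn : 6 ≤ n) (hkl : 3 ≤ k) (hku : k ≤ n - 2)
    (T : SimpleGraph (Fin n)) (hT : T.IsTree) (hseg : countDeg T 2 = n - k - 1)
    (hdeg : 2 ≤ countDeg T 4) :
    ∃ T' : SimpleGraph (Fin n), T'.IsTree ∧ countDeg T' 2 = n - k - 1 ∧
      (∀ α : ℝ, (α < 0 ∨ 1 < α) → R0 T α > R0 T' α) ∧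
      (∀ α : ℝ, 0 < α → α < 1 → R0 T α < R0 T' α) ∧
      (∀ a : ℝ, 1 < a → SEI T a > SEI T' a) ∧
      (∀ a : ℝ, (1 + Real.sqrt 33) / 16 < a → a < 1 → SEI T a < SEI T' a) := by
  classical
  -- two vertices of degree 4
  have hnt : Nontrivial {a : Fin n // deg T a = 4} := by
    rw [← not_subsingleton_iff_nontrivial, ← Finite.card_le_one_iff_subsingleton]
    have : countDeg T 4 = Nat.card {a : Fin n // deg T a = 4} := rfl
    omega
  obtain ⟨⟨u, hu⟩, ⟨v, hv⟩, huv'⟩ := hnt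
  have huv : u ≠ v := fun h => huv' (Subtype.ext h)
  -- a pendant vertex
  obtain ⟨w, hw⟩ := exists_pendant hn T hT hu hv huv
  have huw : u ≠ w := fun h => by rw [h, hw] at hu; omega
  have hvw : v ≠ w := fun h => by rw [h, hw] at hv; omega
  -- first surgery step
  have hd1 : deg T w + 1 < deg T u := by rw [hw, hu]; omega
  obtain ⟨x, hux, hwx, hnwx, hreach⟩ := pick hT huw hd1
  obtain ⟨T1, hT1, dU1, dW1, dO1⟩ := step hT huw hwx hux hnwx hreach
  have dU1' : deg T1 u = 3 := by omega
  have dW1' : deg T1 w = 2 := by rw [dW1, hw]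
  have dV1 : deg T1 v = 4 := by rw [dO1 v huv.symm hvw]; exact hv
  -- second surgery step
  have hd2 : deg T1 w + 1 < deg T1 v := by rw [dW1', dV1]; omega
  obtain ⟨y, hvy, hwy, hnwy, hreach2⟩ := pick hT1 hvw hd2
  obtain ⟨T2, hT2, dV2, dW2, dO2⟩ := step hT1 hvw hwy hvy hnwy hreach2
  have dV2' : deg T2 v = 3 := by omega
  have dW2' : deg T2 w = 3 := by rw [dW2, dW1']
  have dU2 : deg T2 u = 3 := by rw [dO2 u huv huw]; exact dU1'
  have dOther : ∀ a, a ≠ u → a ≠ v → a ≠ w → deg T2 a = deg T a := fun a hau hav haw => by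
    rw [dO2 a hav haw, dO1 a hau haw]
  -- the universal sum computation
  have hsum : ∀ F : ℕ → ℝ,
      (∑ a : Fin n, F (deg T a)) - (∑ a : Fin n, F (deg T2 a))
        = 2 * F 4 + F 1 - 3 * F 3 := by
    intro F
    rw [← Finset.sum_sub_distrib]
    rw [← Finset.sum_subset (Finset.subset_univ ({u, v, w} : Finset (Fin n)))
      (fun a _ ha => ?_)]
    · have h1 : u ∉ ({v, w} : Finset (Fin n)) := by simp [huv, huw]
      have h2 : v ∉ ({w} : Finset (Fin n)) := by simp [hvw]
      rw [Finset.sum_insert h1, Finset.sum_insert h2, Finset.sum_singleton]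
      rw [hu, hv, hw, dU2, dV2', dW2']
      ring
    · simp only [Finset.mem_insert, Finset.mem_singleton, not_or] at ha
      rw [dOther a ha.1 ha.2.1 ha.2.2, sub_self]
  refine ⟨T2, hT2, ?_, ?_, ?_, ?_, ?_⟩
  · rw [← hseg]
    exact Nat.card_congr (Equiv.subtypeEquivRight (fun a => by
      by_cases hau : a = u
      · subst hau; rw [dU2, hu]; omega
      by_cases hav : a = v
      · subst hav; rw [dV2', hv]; omega
      by_cases haw : a = w
      · subst haw; rw [dW2', hw]; omega
      rw [dOther a hau hav haw]))
  · intro α hα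
    have h1 := hsum (fun d => (d : ℝ) ^ α)
    have hc : ((1:ℕ):ℝ) ^ α = 1 := by norm_num
    rw [hc] at h1
    have hk := key_R0_gt α hα
    have e4 : ((4:ℕ):ℝ) = (4:ℝ) := by norm_num
    have e3 : ((3:ℕ):ℝ) = (3:ℝ) := by norm_num
    rw [e4, e3] at h1
    unfold R0
    linarith
  · intro α h0 h1'
    have h1 := hsum (fun d => (d : ℝ) ^ α)
    have hc : ((1:ℕ):ℝ) ^ α = 1 := by norm_num
    rw [hc] at h1
    have hk := key_R0_lt α h0 h1'
    have e4 : ((4:ℕ):ℝ) = (4:ℝ) := by norm_num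
    have e3 : ((3:ℕ):ℝ) = (3:ℝ) := by norm_num
    rw [e4, e3] at h1
    unfold R0
    linarith
  · intro a ha
    have h1 := hsum (fun d => (d : ℝ) * a ^ d)
    have hk := key_SEI_gt a ha
    have e4 : ((4:ℕ):ℝ) = (4:ℝ) := by norm_num
    have e3 : ((3:ℕ):ℝ) = (3:ℝ) := by norm_num
    have e1 : ((1:ℕ):ℝ) = (1:ℝ) := by norm_num
    rw [e4, e3, e1] at h1
    unfold SEI
    linarith
  · intro a hal hau'
    have h1 := hsum (fun d => (d : ℝ) * a ^ d)
    have hk := key_SEI_lt a hal hau'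
    have e4 : ((4:ℕ):ℝ) = (4:ℝ) := by norm_num
    have e3 : ((3:ℕ):ℝ) = (3:ℝ) := by norm_num
    have e1 : ((1:ℕ):ℝ) = (1:ℝ) := by norm_num
    rw [e4, e3, e1] at h1
    unfold SEI
    linarith
end
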